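/- Let σ > 0 and let μ satisfy 0 < μ < μ₂(σ), where μ₂(σ) = 1/(σ + 4), and let d₁ = (1/2 + δ(σ,μ), 1/2 + δ(σ,μ)) with δ(σ,μ) = √((σ² + 4σ)μ² − 2(σ + 2)μ + 1) / (2(σμ − 1)). Then the Fréchet derivative of the map F(x,y) = (F₁(x,y), F₂(x,y)) at d₁ has eigenvectors (1,1) and (1,−1), and the set of its eigenvalues is exactly {(σ + 4)μ − 1, (σ²μ² + 2(σ + 2)μ − 1)/(1 − σμ)}. -/

import Mathlib

noncomputable def F1 (σ μ x y : ℝ) : ℝ :=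
  ((1 - x) - μ) * x * (x + σ * x * (1 - y)) - (x - μ) * (1 - x) * ((1 - x) + σ * (1 - x) * y)

noncomputable def F2 (σ μ x y : ℝ) : ℝ :=
  ((1 - y) - μ) * y * (y + σ * y * (1 - x)) - (y - μ) * (1 - y) * ((1 - y) + σ * (1 - y) * x)

noncomputable def F (σ μ : ℝ) : ℝ × ℝ → ℝ × ℝ :=
  fun p => (F1 σ μ p.1 p.2, F2 σ μ p.1 p.2)

noncomputable def deltaD (σ μ : ℝ) : ℝ :=
  Real.sqrt ((σ^2 + 4 * σ) * μ^2 - 2 * (σ + 2) * μ + 1) / (2 * (σ * μ - 1))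

theorem jacobian_eigenvalues_at_d1 (σ μ : ℝ) (hσ : 0 < σ)
    (hlo : 0 < μ) (hhi : μ < 1 / (σ + 4)) :
    ∃ a b : ℝ,
      fderiv ℝ (F σ μ) (1/2 + deltaD σ μ, 1/2 + deltaD σ μ) (1, 1) = a • ((1 : ℝ), (1 : ℝ)) ∧
      fderiv ℝ (F σ μ) (1/2 + deltaD σ μ, 1/2 + deltaD σ μ) (1, -1) = b • ((1 : ℝ), (-1 : ℝ)) ∧
      ({a, b} : Set ℝ) =
        {(σ + 4) * μ - 1, (σ^2 * μ^2 + 2 * (σ + 2) * μ - 1) / (1 - σ * μ)} := by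
  have hσ4 : (0:ℝ) < σ + 4 := by linarith
  have h1μ : (σ + 4) * μ < 1 := by
    rw [lt_div_iff₀ hσ4] at hhi; linarith [hhi]
  have hσμ : σ * μ < 1 := by nlinarith
  have hne : σ * μ - 1 ≠ 0 := by intro h; nlinarith
  have hR : 0 ≤ (σ^2 + 4 * σ) * μ^2 - 2 * (σ + 2) * μ + 1 := by nlinarith
  have hδ : 4 * (deltaD σ μ)^2 * (σ * μ - 1) = (σ + 4) * μ - 1 := by
    have h2 : (Real.sqrt ((σ^2 + 4 * σ) * μ^2 - 2 * (σ + 2) * μ + 1))^2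
        = (σ^2 + 4 * σ) * μ^2 - 2 * (σ + 2) * μ + 1 := Real.sq_sqrt hR
    rw [deltaD, div_pow, h2]
    have h3 : ((σ^2 + 4 * σ) * μ^2 - 2 * (σ + 2) * μ + 1)
        = ((σ + 4) * μ - 1) * (σ * μ - 1) := by ring
    field_simp
    linear_combination (4 * (σ * μ - 1)) * h3
  set t := deltaD σ μ with ht
  set d : ℝ := 1/2 + t with hd
  have hx : HasFDerivAt (fun p : ℝ × ℝ => p.1) (ContinuousLinearMap.fst ℝ ℝ ℝ) (d, d) :=
    hasFDerivAt_fst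
  have hy : HasFDerivAt (fun p : ℝ × ℝ => p.2) (ContinuousLinearMap.snd ℝ ℝ ℝ) (d, d) :=
    hasFDerivAt_snd
  have hc1 : HasFDerivAt (fun _ : ℝ × ℝ => (1:ℝ)) (0 : ℝ × ℝ →L[ℝ] ℝ) (d, d) := hasFDerivAt_const 1 _
  have h1 := (((((hc1.sub hx).sub_const μ).mul hx).mul
      (hx.add ((hx.const_mul σ).mul (hc1.sub hy)))).sub
      (((hx.sub_const μ).mul (hc1.sub hx)).mul
      ((hc1.sub hx).add (((hc1.sub hx).const_mul σ).mul hy))))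
  have h2 := (((((hc1.sub hy).sub_const μ).mul hy).mul
      (hy.add ((hy.const_mul σ).mul (hc1.sub hx)))).sub
      (((hy.sub_const μ).mul (hc1.sub hy)).mul
      ((hc1.sub hy).add (((hc1.sub hy).const_mul σ).mul hx))))
  have hF : HasFDerivAt (F σ μ) _ (d, d) := h1.prodMk h2
  rw [hF.fderiv]
  refine ⟨(σ + 4) * μ - 1, (σ^2 * μ^2 + 2 * (σ + 2) * μ - 1) / (1 - σ * μ), ?_, ?_, rfl⟩
  · simp only [ContinuousLinearMap.prod_apply, ContinuousLinearMap.add_apply,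
      ContinuousLinearMap.sub_apply, ContinuousLinearMap.smul_apply,
      ContinuousLinearMap.coe_fst', ContinuousLinearMap.coe_snd',
      ContinuousLinearMap.zero_apply, Prod.smul_mk, smul_eq_mul, Prod.mk.injEq,
      Pi.mul_apply, Pi.sub_apply, Pi.add_apply]
    constructor <;> linear_combination (3/2 : ℝ) * hδ
  · simp only [ContinuousLinearMap.prod_apply, ContinuousLinearMap.add_apply,
      ContinuousLinearMap.sub_apply, ContinuousLinearMap.smul_apply,
      ContinuousLinearMap.coe_fst', ContinuousLinearMap.coe_snd',
      ContinuousLinearMap.zero_apply, Prod.smul_mk, smul_eq_mul, Prod.mk.injEq,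
      Pi.mul_apply, Pi.sub_apply, Pi.add_apply]
    have h1σμ : 1 - σ * μ ≠ 0 := by intro h; nlinarith
    rw [div_mul_eq_mul_div, div_mul_eq_mul_div, eq_div_iff h1σμ, eq_div_iff h1σμ]
    exact ⟨by linear_combination (3/2 + σ/2 - σ*μ/2 : ℝ) * hδ,
           by linear_combination (-(3/2) - σ/2 + σ*μ/2 : ℝ) * hδ⟩
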